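/- Let p be an odd prime, G = ℤ_p, M a real representation of G, and θ ∈ M nonzero. For each k = 0, ..., (p-1)/2, the elements θ^k = Σ_{i=0}^{p-1} Re(λ^{ki})·(λ^i·θ) and θ̄^k = Σ_{i=0}^{p-1} Im(λ^{ki})·(λ^i·θ) have annihilator ideal containing m^k; i.e., every element of m^k annihilates θ^k and θ̄^k. -/

import Mathlib

/-- `λ = e^{2πi/p}`. -/
noncomputable def zeta (p : ℕ) : ℂ := Complex.exp (2 * Real.pi * Complex.I / p)

/-- The group element `λ^i` of `ℤ_p`, viewed inside the real group ring `ℝ[ℤ_p]`. -/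
noncomputable def grpElt (p : ℕ) [NeZero p] (i : ℕ) :
    MonoidAlgebra ℝ (Multiplicative (ZMod p)) :=
  MonoidAlgebra.of ℝ (Multiplicative (ZMod p)) (Multiplicative.ofAdd (i : ZMod p))

/-- `a_k = Σ_{i=0}^{p-1} Re(λ^{ki})·λ^i` in `ℝ[ℤ_p]`. -/
noncomputable def aElt (p : ℕ) [NeZero p] (k : ℕ) :
    MonoidAlgebra ℝ (Multiplicative (ZMod p)) :=
  ∑ i ∈ Finset.range p, (zeta p ^ (k * i)).re • grpElt p i

/-- `b_k = Σ_{i=0}^{p-1} Im(λ^{ki})·λ^i` in `ℝ[ℤ_p]`. -/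
noncomputable def bElt (p : ℕ) [NeZero p] (k : ℕ) :
    MonoidAlgebra ℝ (Multiplicative (ZMod p)) :=
  ∑ i ∈ Finset.range p, (zeta p ^ (k * i)).im • grpElt p i

/-- `I_k ⊆ ℝ[ℤ_p]`, the real span of `a_k` and `b_k`. -/
noncomputable def Icomp (p : ℕ) [NeZero p] (k : ℕ) :
    Submodule ℝ (MonoidAlgebra ℝ (Multiplicative (ZMod p))) :=
  Submodule.span ℝ {aElt p k, bElt p k}

/-- `m^k = ⊕_{j ≠ k} I_j`, the ideal of elements whose `I_k`-component vanishes. -/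
noncomputable def mSub (p : ℕ) [NeZero p] (k : ℕ) :
    Submodule ℝ (MonoidAlgebra ℝ (Multiplicative (ZMod p))) :=
  ⨆ j ∈ (Finset.range ((p - 1) / 2 + 1)).erase k, Icomp p j

/-- The generator `λ` of `ℤ_p`. -/
def gen (p : ℕ) : Multiplicative (ZMod p) := Multiplicative.ofAdd (1 : ZMod p)

/-! ### Auxiliary lemmas -/

theorem sum_range_eq_zmod (p : ℕ) [NeZero p] {M : Type*} [AddCommMonoid M] (f : ZMod p → M) :
    ∑ i ∈ Finset.range p, f (i : ZMod p) = ∑ z : ZMod p, f z := by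
  refine Finset.sum_nbij' (fun i => (i : ZMod p)) (fun z => z.val) ?_ ?_ ?_ ?_ ?_ <;>
    simp [ZMod.val_lt, ZMod.natCast_rightInverse _, ZMod.val_natCast_of_lt] <;>
    exact fun a ha => Nat.mod_eq_of_lt ha

section chi
variable (p : ℕ) [NeZero p]

lemma zeta_prim : IsPrimitiveRoot (zeta p) p :=
  Complex.isPrimitiveRoot_exp p (NeZero.ne p)

noncomputable def chi (z : ZMod p) : ℂ := zeta p ^ z.val

lemma zeta_pow_mod (m : ℕ) : zeta p ^ (m % p) = zeta p ^ m := by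
  conv_rhs => rw [← Nat.div_add_mod m p]
  rw [pow_add, pow_mul, (zeta_prim p).pow_eq_one, one_pow, one_mul]

lemma chi_natCast (m : ℕ) : chi p (m : ZMod p) = zeta p ^ m := by
  rw [chi, ZMod.val_natCast, zeta_pow_mod]

lemma chi_add (a b : ZMod p) : chi p (a + b) = chi p a * chi p b := by
  rw [chi, chi, chi, ZMod.val_add, zeta_pow_mod, pow_add]

omit [NeZero p] in
lemma chi_zero : chi p 0 = 1 := by simp [chi]

lemma conj_chi (a : ZMod p) : (starRingEnd ℂ) (chi p a) = chi p (-a) := by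
  have h1 : chi p a * chi p (-a) = 1 := by rw [← chi_add]; simp [chi_zero]
  have habs : ‖chi p a‖ = 1 := by
    rw [chi, norm_pow, zeta, Complex.norm_exp]
    simp [Complex.div_re, Complex.mul_re]
  have h2 : (starRingEnd ℂ) (chi p a) * chi p a = 1 := by
    rw [mul_comm, Complex.mul_conj, ← Complex.sq_norm, habs]; norm_num
  rw [eq_inv_of_mul_eq_one_left h2]
  exact (eq_inv_of_mul_eq_one_right h1).symm

lemma sum_chi (hp : 1 < p) : ∑ z : ZMod p, chi p z = 0 := by
  have h := (zeta_prim p).geom_sum_eq_zero hp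
  rw [← sum_range_eq_zmod p (chi p)]
  rw [← h]
  exact Finset.sum_congr rfl fun i _ => by rw [chi_natCast]

lemma sum_chi_mul (hp : 1 < p) [Fact p.Prime] {c : ZMod p} (hc : c ≠ 0) :
    ∑ z : ZMod p, chi p (c * z) = 0 := by
  rw [show (∑ z : ZMod p, chi p (c * z)) = ∑ z : ZMod p, chi p z from
    Fintype.sum_equiv (Equiv.mulLeft₀ c hc) _ (chi p) (fun z => rfl)]
  exact sum_chi p hp

lemma sum_chi_affine (hp : 1 < p) [Fact p.Prime] {c : ZMod p} (hc : c ≠ 0) (n : ZMod p) :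
    ∑ z : ZMod p, chi p (n + c * z) = 0 := by
  simp only [chi_add]
  rw [← Finset.mul_sum, sum_chi_mul p hp hc, mul_zero]

end chi

-- pointwise complex identities
lemma re_mul_re (u v : ℂ) : u.re * v.re =
    ((u*v + u*(starRingEnd ℂ) v + (starRingEnd ℂ) u*v + (starRingEnd ℂ) u*(starRingEnd ℂ) v).re)/4 := by
  simp [Complex.add_re, Complex.mul_re, Complex.conj_re, Complex.conj_im]; ring

lemma im_mul_im (u v : ℂ) : u.im * v.im =
    ((-(u*v) + u*(starRingEnd ℂ) v + (starRingEnd ℂ) u*v - (starRingEnd ℂ) u*(starRingEnd ℂ) v).re)/4 := by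
  simp [Complex.add_re, Complex.sub_re, Complex.neg_re, Complex.mul_re, Complex.conj_re, Complex.conj_im]; ring

lemma re_mul_im (u v : ℂ) : u.re * v.im =
    ((u*v - u*(starRingEnd ℂ) v + (starRingEnd ℂ) u*v - (starRingEnd ℂ) u*(starRingEnd ℂ) v).im)/4 := by
  simp [Complex.add_im, Complex.sub_im, Complex.mul_im, Complex.conj_re, Complex.conj_im]; ring

lemma im_mul_re (u v : ℂ) : u.im * v.re =
    ((u*v + u*(starRingEnd ℂ) v - (starRingEnd ℂ) u*v - (starRingEnd ℂ) u*(starRingEnd ℂ) v).im)/4 := by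
  simp [Complex.add_im, Complex.sub_im, Complex.mul_im, Complex.conj_re, Complex.conj_im]; ring

section trig
variable (p : ℕ) [NeZero p] [Fact p.Prime] (a b n : ZMod p)

lemma sumS1 (ha : a + b ≠ 0) :
    ∑ i : ZMod p, chi p (a*i) * chi p (b*(n+i)) = 0 := by
  have h : ∀ i : ZMod p, chi p (a*i) * chi p (b*(n+i)) = chi p (b*n + (a+b)*i) := by
    intro i
    rw [← chi_add]
    congr 1
    ring
  simp only [h]
  exact sum_chi_affine p (Fact.out (p := p.Prime)).one_lt ha (b*n)

lemma sumS2 (hb : a - b ≠ 0) :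
    ∑ i : ZMod p, chi p (a*i) * (starRingEnd ℂ) (chi p (b*(n+i))) = 0 := by
  have h : ∀ i : ZMod p, chi p (a*i) * (starRingEnd ℂ) (chi p (b*(n+i)))
      = chi p (-(b*n) + (a-b)*i) := by
    intro i
    rw [conj_chi, ← chi_add]
    congr 1
    ring
  simp only [h]
  exact sum_chi_affine p (Fact.out (p := p.Prime)).one_lt hb (-(b*n))

lemma sumS3 (hb : a - b ≠ 0) :
    ∑ i : ZMod p, (starRingEnd ℂ) (chi p (a*i)) * chi p (b*(n+i)) = 0 := by
  have h := congrArg (starRingEnd ℂ) (sumS2 p a b n hb)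
  rw [map_sum] at h
  simpa using h

lemma sumS4 (ha : a + b ≠ 0) :
    ∑ i : ZMod p, (starRingEnd ℂ) (chi p (a*i)) * (starRingEnd ℂ) (chi p (b*(n+i))) = 0 := by
  have h := congrArg (starRingEnd ℂ) (sumS1 p a b n ha)
  rw [map_sum] at h
  simpa using h

lemma trig_re_re (ha : a + b ≠ 0) (hb : a - b ≠ 0) :
    ∑ i : ZMod p, (chi p (a*i)).re * (chi p (b*(n+i))).re = 0 := by
  calc ∑ i : ZMod p, (chi p (a*i)).re * (chi p (b*(n+i))).re
      = ∑ i : ZMod p, ((chi p (a*i)*chi p (b*(n+i)) + chi p (a*i)*(starRingEnd ℂ) (chi p (b*(n+i)))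
        + (starRingEnd ℂ) (chi p (a*i))*chi p (b*(n+i))
        + (starRingEnd ℂ) (chi p (a*i))*(starRingEnd ℂ) (chi p (b*(n+i)))).re)/4 :=
        Finset.sum_congr rfl fun i _ => re_mul_re _ _
    _ = 0 := by
        rw [← Finset.sum_div, ← Complex.re_sum]
        simp only [Finset.sum_add_distrib, sumS1 p a b n ha, sumS2 p a b n hb,
          sumS3 p a b n hb, sumS4 p a b n ha]
        norm_num

lemma trig_im_im (ha : a + b ≠ 0) (hb : a - b ≠ 0) :
    ∑ i : ZMod p, (chi p (a*i)).im * (chi p (b*(n+i))).im = 0 := by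
  calc ∑ i : ZMod p, (chi p (a*i)).im * (chi p (b*(n+i))).im
      = ∑ i : ZMod p, ((-(chi p (a*i)*chi p (b*(n+i))) + chi p (a*i)*(starRingEnd ℂ) (chi p (b*(n+i)))
        + (starRingEnd ℂ) (chi p (a*i))*chi p (b*(n+i))
        - (starRingEnd ℂ) (chi p (a*i))*(starRingEnd ℂ) (chi p (b*(n+i)))).re)/4 :=
        Finset.sum_congr rfl fun i _ => im_mul_im _ _
    _ = 0 := by
        rw [← Finset.sum_div, ← Complex.re_sum]
        simp only [Finset.sum_sub_distrib, Finset.sum_add_distrib, Finset.sum_neg_distrib,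
          sumS1 p a b n ha, sumS2 p a b n hb, sumS3 p a b n hb, sumS4 p a b n ha]
        norm_num

lemma trig_re_im (ha : a + b ≠ 0) (hb : a - b ≠ 0) :
    ∑ i : ZMod p, (chi p (a*i)).re * (chi p (b*(n+i))).im = 0 := by
  calc ∑ i : ZMod p, (chi p (a*i)).re * (chi p (b*(n+i))).im
      = ∑ i : ZMod p, ((chi p (a*i)*chi p (b*(n+i)) - chi p (a*i)*(starRingEnd ℂ) (chi p (b*(n+i)))
        + (starRingEnd ℂ) (chi p (a*i))*chi p (b*(n+i))
        - (starRingEnd ℂ) (chi p (a*i))*(starRingEnd ℂ) (chi p (b*(n+i)))).im)/4 :=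
        Finset.sum_congr rfl fun i _ => re_mul_im _ _
    _ = 0 := by
        rw [← Finset.sum_div, ← Complex.im_sum]
        simp only [Finset.sum_sub_distrib, Finset.sum_add_distrib,
          sumS1 p a b n ha, sumS2 p a b n hb, sumS3 p a b n hb, sumS4 p a b n ha]
        norm_num

lemma trig_im_re (ha : a + b ≠ 0) (hb : a - b ≠ 0) :
    ∑ i : ZMod p, (chi p (a*i)).im * (chi p (b*(n+i))).re = 0 := by
  calc ∑ i : ZMod p, (chi p (a*i)).im * (chi p (b*(n+i))).re
      = ∑ i : ZMod p, ((chi p (a*i)*chi p (b*(n+i)) + chi p (a*i)*(starRingEnd ℂ) (chi p (b*(n+i)))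
        - (starRingEnd ℂ) (chi p (a*i))*chi p (b*(n+i))
        - (starRingEnd ℂ) (chi p (a*i))*(starRingEnd ℂ) (chi p (b*(n+i)))).im)/4 :=
        Finset.sum_congr rfl fun i _ => im_mul_re _ _
    _ = 0 := by
        rw [← Finset.sum_div, ← Complex.im_sum]
        simp only [Finset.sum_sub_distrib, Finset.sum_add_distrib,
          sumS1 p a b n ha, sumS2 p a b n hb, sumS3 p a b n hb, sumS4 p a b n ha]
        norm_num

end trig

section rep
variable (p : ℕ) [NeZero p] {M : Type} [AddCommGroup M] [Module ℝ M]
  (ρ : Representation ℝ (Multiplicative (ZMod p)) M)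

noncomputable def actMap (x : M) : MonoidAlgebra ℝ (Multiplicative (ZMod p)) →ₗ[ℝ] M :=
  ∑ σ : Multiplicative (ZMod p), LinearMap.smulRight ((Finsupp.lapply σ⁻¹).comp (MonoidAlgebra.coeffLinearEquiv ℝ).toLinearMap) (ρ σ x)

lemma actMap_apply (x : M) (α : MonoidAlgebra ℝ (Multiplicative (ZMod p))) :
    actMap p ρ x α = ∑ σ : Multiplicative (ZMod p), α.coeff σ⁻¹ • ρ σ x := by
  simp only [actMap, LinearMap.sum_apply, LinearMap.smulRight_apply]
  exact Finset.sum_congr rfl fun σ _ => rfl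

lemma actMap_grpElt (x : M) (i : ℕ) :
    actMap p ρ x (grpElt p i) = ρ (Multiplicative.ofAdd ((i : ZMod p)))⁻¹ x := by
  rw [actMap_apply]
  rw [Finset.sum_eq_single ((Multiplicative.ofAdd ((i : ZMod p)))⁻¹)]
  · simp [grpElt, MonoidAlgebra.of_apply, MonoidAlgebra.coeff_single_apply]
  · intro σ _ hσ
    have h : (Multiplicative.ofAdd ((i : ZMod p))) ≠ σ⁻¹ := by
      intro h; exact hσ (by rw [h, inv_inv])
    simp [grpElt, MonoidAlgebra.of_apply, MonoidAlgebra.coeff_single_apply, h]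
  · intro h; exact absurd (Finset.mem_univ _) h

omit [NeZero p] in
lemma gen_pow (i : ℕ) : gen p ^ i = Multiplicative.ofAdd ((i : ZMod p)) := by
  rw [gen, ← ofAdd_nsmul]
  congr 1
  simp

lemma act_eq_zero (d c : ZMod p → ℝ)
    (h : ∀ n : ZMod p, ∑ z : ZMod p, d z * c (n + z) = 0) (θ : M) :
    ∑ z : ZMod p, d z • ρ (Multiplicative.ofAdd z)⁻¹
      (∑ m : ZMod p, c m • ρ (Multiplicative.ofAdd m) θ) = 0 := by
  have key : ∀ z m : ZMod p, ρ (Multiplicative.ofAdd z)⁻¹ (ρ (Multiplicative.ofAdd m) θ)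
      = ρ (Multiplicative.ofAdd (m - z)) θ := by
    intro z m
    rw [← Module.End.mul_apply, ← map_mul, ← ofAdd_neg, ← ofAdd_add]
    congr 2
    ring
  have step1 : ∀ z : ZMod p, ρ (Multiplicative.ofAdd z)⁻¹
      (∑ m : ZMod p, c m • ρ (Multiplicative.ofAdd m) θ)
      = ∑ n : ZMod p, c (n + z) • ρ (Multiplicative.ofAdd n) θ := by
    intro z
    rw [map_sum]
    simp only [LinearMap.map_smul, key]
    refine (Fintype.sum_equiv (Equiv.addRight z)
      (fun n => c (n + z) • ρ (Multiplicative.ofAdd n) θ)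
      (fun m => c m • ρ (Multiplicative.ofAdd (m - z)) θ) ?_).symm
    intro n
    simp
  simp only [step1, Finset.smul_sum, smul_smul]
  rw [Finset.sum_comm]
  have h0 : ∀ n : ZMod p, ∑ z : ZMod p, (d z * c (n + z)) • ρ (Multiplicative.ofAdd n) θ = 0 := by
    intro n
    rw [← Finset.sum_smul, h n, zero_smul]
  simp only [h0, Finset.sum_const_zero]

end rep

set_option maxHeartbeats 2000000 in
/-- Let `p` be an odd prime, `G = ℤ_p` generated by `λ`, `M` a real representation
of `G`, and `θ ∈ M` nonzero.  For each `0 ≤ k ≤ (p-1)/2`, every element of the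
ideal `m^k` (elements whose `I_k`-component vanishes) annihilates both
`θ^k = Σ_i Re(λ^{ki})·(λ^i·θ)` and `θ̄^k = Σ_i Im(λ^{ki})·(λ^i·θ)`,
where `α = Σ a_g·g⁻¹` annihilates `x` means `Σ a_g (g·x) = 0`. -/
theorem mSub_annihilates (p : ℕ) [Fact p.Prime] (hodd : Odd p)
    (M : Type) [AddCommGroup M] [Module ℝ M]
    (ρ : Representation ℝ (Multiplicative (ZMod p)) M) (θ : M) (hθ : θ ≠ 0)
    (k : ℕ) (hk : k ≤ (p - 1) / 2)
    (α : MonoidAlgebra ℝ (Multiplicative (ZMod p))) (hα : α ∈ mSub p k) :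
    (∑ σ, α.coeff σ⁻¹ • ρ σ (∑ i ∈ Finset.range p, (zeta p ^ (k * i)).re • ρ (gen p ^ i) θ) = 0) ∧
    (∑ σ, α.coeff σ⁻¹ • ρ σ (∑ i ∈ Finset.range p, (zeta p ^ (k * i)).im • ρ (gen p ^ i) θ) = 0) := by
  obtain ⟨t, ht⟩ := hodd
  have hp : p.Prime := Fact.out
  have hp1 : 1 < p := hp.one_lt
  -- nonzero facts about casts
  have hcast : ∀ j : ℕ, j ≤ (p - 1) / 2 → j ≠ k →
      ((j : ZMod p) + (k : ZMod p) ≠ 0 ∧ (j : ZMod p) - (k : ZMod p) ≠ 0) := by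
    intro j hj hjk
    constructor
    · rw [← Nat.cast_add, Ne, ZMod.natCast_eq_zero_iff]
      intro hdvd
      have h1 : j + k = 0 := Nat.eq_zero_of_dvd_of_lt hdvd (by omega) |>.symm ▸ rfl
      omega
    · rw [sub_ne_zero]
      intro h
      apply hjk
      have hv := congrArg ZMod.val h
      rwa [ZMod.val_cast_of_lt (by omega), ZMod.val_cast_of_lt (by omega)] at hv
  -- the key computation
  have key : ∀ (d c : ZMod p → ℝ), (∀ n : ZMod p, ∑ z : ZMod p, d z * c (n + z) = 0) →
      actMap p ρ (∑ m : ZMod p, c m • ρ (Multiplicative.ofAdd m) θ)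
        (∑ i ∈ Finset.range p, d (i : ZMod p) • grpElt p i) = 0 := by
    intro d c h
    rw [map_sum]
    simp only [map_smul, actMap_grpElt]
    rw [sum_range_eq_zmod p (fun z => d z • ρ (Multiplicative.ofAdd z)⁻¹
      (∑ m : ZMod p, c m • ρ (Multiplicative.ofAdd m) θ))]
    exact act_eq_zero p ρ d c h θ
  -- mSub lies in the kernel
  have halpha : ∀ (c : ZMod p → ℝ),
      (∀ j : ℕ, j ≤ (p - 1) / 2 → j ≠ k →
        (∀ n : ZMod p, ∑ z : ZMod p, (chi p ((j : ZMod p) * z)).re * c (n + z) = 0) ∧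
        (∀ n : ZMod p, ∑ z : ZMod p, (chi p ((j : ZMod p) * z)).im * c (n + z) = 0)) →
      actMap p ρ (∑ m : ZMod p, c m • ρ (Multiplicative.ofAdd m) θ) α = 0 := by
    intro c hcond
    have hker : mSub p k ≤ LinearMap.ker
        (actMap p ρ (∑ m : ZMod p, c m • ρ (Multiplicative.ofAdd m) θ)) := by
      refine iSup_le fun j => iSup_le fun hj => ?_
      have hjk : j ≠ k := (Finset.mem_erase.1 hj).1
      have hjle : j ≤ (p - 1) / 2 := by
        have := Finset.mem_range.1 (Finset.mem_erase.1 hj).2; omega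
      obtain ⟨h1, h2⟩ := hcond j hjle hjk
      rw [Icomp, Submodule.span_le]
      intro y hy
      rw [SetLike.mem_coe, LinearMap.mem_ker]
      simp only [Set.mem_insert_iff, Set.mem_singleton_iff] at hy
      rcases hy with rfl | rfl
      · rw [show aElt p j = ∑ i ∈ Finset.range p,
            (chi p ((j : ZMod p) * (i : ZMod p))).re • grpElt p i from
          Finset.sum_congr rfl fun i _ => by rw [← Nat.cast_mul, chi_natCast]]
        exact key _ _ h1
      · rw [show bElt p j = ∑ i ∈ Finset.range p,
            (chi p ((j : ZMod p) * (i : ZMod p))).im • grpElt p i from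
          Finset.sum_congr rfl fun i _ => by rw [← Nat.cast_mul, chi_natCast]]
        exact key _ _ h2
    have := hker hα
    rwa [LinearMap.mem_ker] at this
  constructor
  · rw [show (∑ i ∈ Finset.range p, (zeta p ^ (k * i)).re • ρ (gen p ^ i) θ)
        = ∑ m : ZMod p, (chi p ((k : ZMod p) * m)).re • ρ (Multiplicative.ofAdd m) θ by
      rw [← sum_range_eq_zmod p
        (fun m => (chi p ((k : ZMod p) * m)).re • ρ (Multiplicative.ofAdd m) θ)]
      exact Finset.sum_congr rfl fun i _ => by rw [← Nat.cast_mul, chi_natCast, gen_pow]]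
    rw [← actMap_apply]
    refine halpha _ fun j hjle hjk => ?_
    obtain ⟨hab, hab'⟩ := hcast j hjle hjk
    exact ⟨fun n => trig_re_re p _ _ n hab hab', fun n => trig_im_re p _ _ n hab hab'⟩
  · rw [show (∑ i ∈ Finset.range p, (zeta p ^ (k * i)).im • ρ (gen p ^ i) θ)
        = ∑ m : ZMod p, (chi p ((k : ZMod p) * m)).im • ρ (Multiplicative.ofAdd m) θ by
      rw [← sum_range_eq_zmod p
        (fun m => (chi p ((k : ZMod p) * m)).im • ρ (Multiplicative.ofAdd m) θ)]
      exact Finset.sum_congr rfl fun i _ => by rw [← Nat.cast_mul, chi_natCast, gen_pow]]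
    rw [← actMap_apply]
    refine halpha _ fun j hjle hjk => ?_
    obtain ⟨hab, hab'⟩ := hcast j hjle hjk
    exact ⟨fun n => trig_re_im p _ _ n hab hab', fun n => trig_im_im p _ _ n hab hab'⟩
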